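/- For every finite simple graph G = (V, E) with |V| = n ≥ 2 there exist real numbers 0 < α < β and a map f : V → R^{n−1} such that for all distinct u, v ∈ V: dist(f(u), f(v)) = α if (u,v) ∉ E and dist(f(u), f(v)) = β if (u,v) ∈ E. -/

import Mathlib

noncomputable def padIso (d m : ℕ) (h : d ≤ m) :
    EuclideanSpace ℝ (Fin d) →ₗᵢ[ℝ] EuclideanSpace ℝ (Fin m) where
  toLinearMap :=
    { toFun := fun x => WithLp.toLp 2 (fun j : Fin m => if hj : (j : ℕ) < d then x ⟨j, hj⟩ else 0)
      map_add' := by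
        intro x y; ext j
        by_cases hj : (j : ℕ) < d <;> simp [hj, PiLp.add_apply]
      map_smul' := by
        intro c x; ext j
        by_cases hj : (j : ℕ) < d <;> simp [hj, PiLp.smul_apply] }
  norm_map' := by
    intro x
    rw [EuclideanSpace.norm_eq, EuclideanSpace.norm_eq]
    congr 1
    set F : Fin m → ℝ := fun j => ‖if hj : (j : ℕ) < d then x ⟨j, hj⟩ else 0‖ ^ 2 with hF
    have hinj : ∀ a ∈ Finset.univ, ∀ b ∈ Finset.univ, Fin.castLE h a = Fin.castLE h b → a = b :=
      fun a _ b _ hab => Fin.castLE_injective h hab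
    calc ∑ j : Fin m, F j
        = ∑ j ∈ Finset.univ.image (Fin.castLE h), F j := by
          refine (Finset.sum_subset (Finset.subset_univ _) ?_).symm
          intro j _ hj
          have hlt : ¬ (j : ℕ) < d := fun hlt =>
            hj (Finset.mem_image.2 ⟨⟨j, hlt⟩, Finset.mem_univ _, rfl⟩)
          simp [hF, hlt]
      _ = ∑ i : Fin d, F (Fin.castLE h i) := Finset.sum_image hinj
      _ = ∑ i : Fin d, ‖x i‖ ^ 2 := by
          refine Finset.sum_congr rfl fun i _ => ?_
          simp [hF]

set_option maxHeartbeats 1000000 in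
set_option synthInstance.maxHeartbeats 1000000 in
theorem stmt_14 {V : Type*} [Fintype V] [DecidableEq V] (G : SimpleGraph V)
    [DecidableRel G.Adj] (hn : 2 ≤ Fintype.card V) :
    ∃ (α β : ℝ) (f : V → EuclideanSpace ℝ (Fin (Fintype.card V - 1))),
      0 < α ∧ α < β ∧
      ∀ u v : V, u ≠ v →
        dist (f u) (f v) = if G.Adj u v then β else α := by
  classical
  obtain ⟨v₀⟩ : Nonempty V := Fintype.card_pos_iff.mp (by omega)
  set n := Fintype.card V with hn'
  set θ : V → V → ℝ := fun a b => if a ≠ b ∧ ¬G.Adj a b then 1 else 0 with hθ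
  have θself : ∀ a, θ a a = 0 := fun a => by simp [hθ]
  have θsymm : ∀ a b, θ a b = θ b a := fun a b =>
    if_congr (and_congr ne_comm (not_congr (G.adj_comm a b))) rfl rfl
  have θmul : ∀ a b, θ a b * θ a b = θ a b := fun a b => by
    simp only [hθ]; split_ifs <;> norm_num
  have θle1 : ∀ a b, θ a b ≤ 1 := fun a b => by
    simp only [hθ]; split_ifs <;> norm_num
  set M : V → ℝ := fun u => ∑ b, θ u b with hMdef
  have hM : ∀ u, M u ≤ n := fun u => by
    calc M u ≤ ∑ _b : V, (1:ℝ) := Finset.sum_le_sum fun b _ => θle1 u b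
    _ = n := by simp [hn']
  set K : ℝ := 2 * n + 1 with hK
  have hKn : (2:ℝ) ≤ (n:ℝ) := by exact_mod_cast hn
  have hr2 : ∀ u, Real.sqrt (K - 2 * M u) ^ 2 = K - 2 * M u := fun u =>
    Real.sq_sqrt (by nlinarith [hM u])
  set r : V → ℝ := fun u => Real.sqrt (K - 2 * M u) with hrdef
  set g : V → EuclideanSpace ℝ (V ⊕ V × V) := fun u =>
    WithLp.toLp 2 (Sum.elim (fun w => if w = u then r u else 0)
      (fun p : V × V => if p.1 = u ∨ p.2 = u then θ p.1 p.2 else 0)) with hg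
  have pull : ∀ (c : Prop) [Decidable c] (F : V → ℝ),
      (∑ b, if c then F b else 0) = if c then ∑ b, F b else 0 := by
    intro c _ F; split_ifs <;> simp
  have key : ∀ u v : V, u ≠ v →
      dist (g u) (g v) = Real.sqrt (2 * K - 4 * θ u v) := by
    intro u v huv
    rw [EuclideanSpace.dist_eq]
    congr 1
    have hcoord : ∀ i, dist (g u i) (g v i) ^ 2 = (g u i - g v i) ^ 2 := fun i => by
      rw [Real.dist_eq, sq_abs]
    rw [Finset.sum_congr rfl fun i _ => hcoord i]
    rw [Fintype.sum_sum_type]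
    have b1 : ∑ w : V, (g u (Sum.inl w) - g v (Sum.inl w)) ^ 2 = r u ^ 2 + r v ^ 2 := by
      have pt : ∀ w, (g u (Sum.inl w) - g v (Sum.inl w)) ^ 2
          = (if w = u then r u ^ 2 else 0) + (if w = v then r v ^ 2 else 0) := by
        intro w
        simp only [hg, WithLp.ofLp_toLp, Sum.elim_inl]
        by_cases h1 : w = u
        · have h2 : ¬ w = v := fun h => huv (h1.symm.trans h)
          simp [h1, h2, huv, Ne.symm huv]
        · by_cases h2 : w = v <;> simp [h1, h2, huv, Ne.symm huv]
      rw [Finset.sum_congr rfl fun w _ => pt w, Finset.sum_add_distrib]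
      simp [Finset.sum_ite_eq']
    have sum1 : ∀ w : V, (∑ p : V × V,
        (if p.1 = w ∨ p.2 = w then θ p.1 p.2 else 0)) = 2 * M w := by
      intro w
      have pt : ∀ a b : V, (if a = w ∨ b = w then θ a b else 0)
          = (if a = w then θ a b else 0) + (if b = w then θ a b else 0) := by
        intro a b
        by_cases h1 : a = w <;> by_cases h2 : b = w <;>
          simp [h1, h2, θself]
      rw [Fintype.sum_prod_type]
      calc (∑ a : V, ∑ b : V, (if (a, b).1 = w ∨ (a, b).2 = w then θ (a, b).1 (a, b).2 else 0))
          = ∑ a : V, ((if a = w then ∑ b, θ a b else 0) + θ a w) := by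
            refine Finset.sum_congr rfl fun a _ => ?_
            rw [Finset.sum_congr rfl fun b _ => pt a b, Finset.sum_add_distrib, pull]
            simp [Finset.sum_ite_eq']
        _ = M w + M w := by
            rw [Finset.sum_add_distrib]
            congr 1
            · simp [Finset.sum_ite_eq', hMdef]
            · simp only [hMdef]
              exact Finset.sum_congr rfl fun a _ => θsymm a w
        _ = 2 * M w := by ring
    have sum2 : (∑ p : V × V,
        ((if p.1 = u ∨ p.2 = u then θ p.1 p.2 else 0)
          * (if p.1 = v ∨ p.2 = v then θ p.1 p.2 else 0)))
        = 2 * θ u v := by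
      have pt : ∀ a b : V,
          (if a = u ∨ b = u then θ a b else 0) * (if a = v ∨ b = v then θ a b else 0)
          = (if a = u then (if b = v then θ a b else 0) else 0)
            + (if a = v then (if b = u then θ a b else 0) else 0) := by
        intro a b
        by_cases h1 : a = u
        · subst h1
          by_cases h4 : b = v
          · subst h4; simp [huv, θmul]
          · simp [huv, h4]
        · by_cases h2 : b = u
          · subst h2
            by_cases h3 : a = v
            · subst h3; simp [h1, huv, Ne.symm huv, θmul]
            · simp [h1, h3, huv, Ne.symm huv]
          · simp [h1, h2]
      rw [Fintype.sum_prod_type]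
      calc (∑ a : V, ∑ b : V,
          ((if (a, b).1 = u ∨ (a, b).2 = u then θ (a, b).1 (a, b).2 else 0)
            * (if (a, b).1 = v ∨ (a, b).2 = v then θ (a, b).1 (a, b).2 else 0)))
          = ∑ a : V, ((if a = u then θ a v else 0) + (if a = v then θ a u else 0)) := by
            refine Finset.sum_congr rfl fun a _ => ?_
            rw [Finset.sum_congr rfl fun b _ => pt a b, Finset.sum_add_distrib]
            simp [Finset.sum_ite_eq']
        _ = θ u v + θ v u := by
            rw [Finset.sum_add_distrib]
            simp [Finset.sum_ite_eq']
        _ = 2 * θ u v := by rw [← θsymm u v]; ring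
    have b2 : ∑ p : V × V, (g u (Sum.inr p) - g v (Sum.inr p)) ^ 2
        = 2 * M u + 2 * M v - 4 * θ u v := by
      have ptsq : ∀ p : V × V, (g u (Sum.inr p) - g v (Sum.inr p)) ^ 2
          = (if p.1 = u ∨ p.2 = u then θ p.1 p.2 else 0)
            + (if p.1 = v ∨ p.2 = v then θ p.1 p.2 else 0)
            - 2 * ((if p.1 = u ∨ p.2 = u then θ p.1 p.2 else 0)
              * (if p.1 = v ∨ p.2 = v then θ p.1 p.2 else 0)) := by
        rintro ⟨a, b⟩
        simp only [hg, WithLp.ofLp_toLp, Sum.elim_inr]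
        by_cases h1 : a = u ∨ b = u <;> by_cases h2 : a = v ∨ b = v <;>
          simp [h1, h2] <;> nlinarith [θmul a b]
      calc ∑ p : V × V, (g u (Sum.inr p) - g v (Sum.inr p)) ^ 2
          = ∑ p : V × V,
            ((if p.1 = u ∨ p.2 = u then θ p.1 p.2 else 0)
              + (if p.1 = v ∨ p.2 = v then θ p.1 p.2 else 0)
              - 2 * ((if p.1 = u ∨ p.2 = u then θ p.1 p.2 else 0)
                * (if p.1 = v ∨ p.2 = v then θ p.1 p.2 else 0))) :=
            Finset.sum_congr rfl fun p _ => ptsq p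
        _ = (∑ p : V × V, (if p.1 = u ∨ p.2 = u then θ p.1 p.2 else 0))
            + (∑ p : V × V, (if p.1 = v ∨ p.2 = v then θ p.1 p.2 else 0))
            - 2 * ∑ p : V × V,
              ((if p.1 = u ∨ p.2 = u then θ p.1 p.2 else 0)
                * (if p.1 = v ∨ p.2 = v then θ p.1 p.2 else 0)) := by
            rw [Finset.sum_sub_distrib, Finset.sum_add_distrib, Finset.mul_sum]
        _ = 2 * M u + 2 * M v - 4 * θ u v := by
            rw [sum1 u, sum1 v, sum2]; ring
    rw [b1, b2, hr2 u, hr2 v]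
    ring
  -- dimension reduction
  set h : V → EuclideanSpace ℝ (V ⊕ V × V) := fun u => g u - g v₀ with hh
  set S : Submodule ℝ (EuclideanSpace ℝ (V ⊕ V × V)) := Submodule.span ℝ (Set.range h)
    with hS
  have hmem : ∀ u, h u ∈ S := fun u => Submodule.subset_span ⟨u, rfl⟩
  have hfr : Module.finrank ℝ S ≤ n - 1 := by
    set s : Finset (EuclideanSpace ℝ (V ⊕ V × V)) :=
      (Finset.univ.erase v₀).image h with hs
    have hsub : S ≤ Submodule.span ℝ (s : Set (EuclideanSpace ℝ (V ⊕ V × V))) := by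
      rw [hS, Submodule.span_le]
      rintro _ ⟨u, rfl⟩
      by_cases hu : u = v₀
      · have h0 : h u = 0 := by rw [hu]; simp [hh]
        rw [h0]; exact Submodule.zero_mem _
      · exact Submodule.subset_span
          (Finset.mem_coe.2 (Finset.mem_image.2 ⟨u, Finset.mem_erase.2 ⟨hu, Finset.mem_univ _⟩, rfl⟩))
    calc Module.finrank ℝ S ≤ Module.finrank ℝ (Submodule.span ℝ (s : Set (EuclideanSpace ℝ (V ⊕ V × V)))) :=
          Submodule.finrank_mono hsub
      _ ≤ s.card := finrank_span_finset_le_card s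
      _ ≤ (Finset.univ.erase v₀).card := Finset.card_image_le
      _ = n - 1 := by rw [Finset.card_erase_of_mem (Finset.mem_univ _), Finset.card_univ]
  set B := stdOrthonormalBasis ℝ S with hB
  set f : V → EuclideanSpace ℝ (Fin (n - 1)) :=
    fun u => padIso _ _ hfr (B.repr ⟨h u, hmem u⟩) with hf
  have hdist : ∀ u v : V, dist (f u) (f v) = dist (g u) (g v) := by
    intro u v
    rw [dist_eq_norm, dist_eq_norm, hf]
    rw [← LinearIsometry.map_sub, LinearIsometry.norm_map, ← LinearIsometryEquiv.map_sub,
      LinearIsometryEquiv.norm_map]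
    have : (⟨h u, hmem u⟩ - ⟨h v, hmem v⟩ : S) = ⟨g u - g v, by
        have : g u - g v = h u - h v := by rw [hh]; exact (sub_sub_sub_cancel_right _ _ _).symm
        rw [this]; exact sub_mem (hmem u) (hmem v)⟩ := by
      ext1
      simp [hh]
    rw [this]
    rfl
  have hKpos : 0 < 2 * K - 4 := by nlinarith
  refine ⟨Real.sqrt (2 * K - 4), Real.sqrt (2 * K), f, Real.sqrt_pos.2 hKpos, ?_, ?_⟩
  · exact Real.sqrt_lt_sqrt (le_of_lt hKpos) (by norm_num)
  · intro u v huv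
    rw [hdist, key u v huv]
    by_cases hadj : G.Adj u v
    · rw [if_pos hadj]
      have : θ u v = 0 := by simp [hθ, hadj]
      rw [this]; norm_num
    · rw [if_neg hadj]
      have : θ u v = 1 := by simp [hθ, huv, hadj]
      rw [this]; norm_num
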